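/- Let k be a field and a ∈ ℝ. The interval persistence module k(a,∞) over (ℝ,≤) is not a projective object in the category of persistence modules (equivalently, not a graded projective k[U₀]-module), although it is a flat object (filtered colimit of the projectives k[b,∞) for b > a). -/

import Mathlib

open CategoryTheory

noncomputable section
attribute [local instance] Classical.propDecidable
set_option linter.unusedSectionVars false

variable (R : Type) [Ring R] {P : Type} [Preorder P]

/-- Condition that a subset is order-convex. -/
def IsConvexSet (I : Set P) : Prop := ∀ ⦃x y z : P⦄, x ∈ I → z ∈ I → x ≤ y → y ≤ z → y ∈ I

/-- The value of the interval persistence module at a point. -/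
def intervalObj (I : Set P) (a : P) : Submodule R R :=
  if a ∈ I then (⊤ : Submodule R R) else ⊥

lemma intervalObj_eq_zero {I : Set P} {a : P} (h : a ∉ I) (x : intervalObj R I a) :
    x = 0 := by
  have hx := x.2
  simp only [intervalObj, if_neg h, Submodule.mem_bot] at hx
  exact Subtype.ext hx

/-- The structure map of the interval module between two degrees. -/
def intervalMapAux (I : Set P) (a b : P) :
    (intervalObj R I a) →ₗ[R] (intervalObj R I b) :=
  if h : a ∈ I ∧ b ∈ I then
    Submodule.inclusion (by simp [intervalObj, h.1, h.2])
  else 0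

lemma intervalMapAux_coe {I : Set P} {a b : P} (ha : a ∈ I) (hb : b ∈ I)
    (x : intervalObj R I a) : ((intervalMapAux R I a b x : R)) = (x : R) := by
  simp [intervalMapAux, ha, hb]

lemma intervalMapAux_of_not {I : Set P} {a b : P} (h : ¬(a ∈ I ∧ b ∈ I))
    (x : intervalObj R I a) : intervalMapAux R I a b x = 0 := by
  simp [intervalMapAux, h]

/-- The interval (indicator) persistence module of a convex set `I`,
as a functor from the preorder `P` to `R`-modules. -/
def intervalModule (I : Set P) (hI : IsConvexSet I) : P ⥤ ModuleCat R where
  obj a := ModuleCat.of R (intervalObj R I a)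
  map {a b} f := ModuleCat.ofHom (intervalMapAux R I a b)
  map_id a := by
    ext x : 2
    by_cases h : a ∈ I
    · exact Subtype.ext (intervalMapAux_coe R h h x)
    · rw [intervalObj_eq_zero R h x]
      simp
  map_comp {a b c} f g := by
    ext x : 2
    show intervalMapAux R I a c x = intervalMapAux R I b c (intervalMapAux R I a b x)
    by_cases ha : a ∈ I
    · by_cases hc : c ∈ I
      · have hb : b ∈ I := hI ha hc (leOfHom f) (leOfHom g)
        apply Subtype.ext
        rw [intervalMapAux_coe R ha hc, intervalMapAux_coe R hb hc,
          intervalMapAux_coe R ha hb]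
      · rw [intervalMapAux_of_not R (fun h => hc h.2),
          intervalMapAux_of_not R (fun h => hc h.2)]
    · rw [intervalObj_eq_zero R ha x]
      simp

end

lemma IsConvexSet.of_ordConnected {P : Type} [Preorder P] {s : Set P}
    (h : s.OrdConnected) : IsConvexSet s :=
  fun _ _ _ hx hz hxy hyz => h.out hx hz ⟨hxy, hyz⟩

open CategoryTheory Limits

noncomputable section
variable (k : Type) [Field k]

/-- The index poset `{(s,t) | s + t ≤ r}` for the graded tensor product. -/
abbrev SumLe (r : ℝ) : Type := {p : ℝ × ℝ // p.1 + p.2 ≤ r}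

lemma SumLe.le1 {r : ℝ} {p q : SumLe r} (h : p ≤ q) : p.1.1 ≤ q.1.1 := h.1
lemma SumLe.le2 {r : ℝ} {p q : SumLe r} (h : p ≤ q) : p.1.2 ≤ q.1.2 := h.2

/-- The diagram `(s,t) ↦ M_s ⊗ N_t` over `{(s,t) | s + t ≤ r}` whose colimit is the
degree-`r` piece of the graded tensor product `M ⊗_gr N`. -/
def grDiagram (M N : ℝ ⥤ ModuleCat k) (r : ℝ) : SumLe r ⥤ ModuleCat k where
  obj p := ModuleCat.of k (TensorProduct k (M.obj p.1.1) (N.obj p.1.2))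
  map {p q} f :=
    ModuleCat.ofHom (TensorProduct.map (M.map (homOfLE (SumLe.le1 (leOfHom f)))).hom
      (N.map (homOfLE (SumLe.le2 (leOfHom f)))).hom)
  map_id p := by
    dsimp
    rw [M.map_id, N.map_id]
    ext : 1
    simp [TensorProduct.map_id]
  map_comp {p q s} f g := by
    rw [show (homOfLE (SumLe.le1 (leOfHom (f ≫ g))) : p.1.1 ⟶ s.1.1) =
        homOfLE (SumLe.le1 (leOfHom f)) ≫ homOfLE (SumLe.le1 (leOfHom g)) from
        Subsingleton.elim _ _,
      show (homOfLE (SumLe.le2 (leOfHom (f ≫ g))) : p.1.2 ⟶ s.1.2) =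
        homOfLE (SumLe.le2 (leOfHom f)) ≫ homOfLE (SumLe.le2 (leOfHom g)) from
        Subsingleton.elim _ _,
      M.map_comp, N.map_comp]
    ext : 1
    simp [TensorProduct.map_comp]

/-- The structure-map cocone: the degree-`r` diagram mapping into the degree-`r'` colimit. -/
def grCocone (M N : ℝ ⥤ ModuleCat k) {r r' : ℝ} (h : r ≤ r') :
    Cocone (grDiagram k M N r) where
  pt := colimit (grDiagram k M N r')
  ι :=
    { app := fun j => colimit.ι (grDiagram k M N r') ⟨j.1, j.2.trans h⟩
      naturality := fun j j' f => by
        dsimp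
        refine Eq.trans ?_ (Category.comp_id _).symm
        exact colimit.w (grDiagram k M N r')
          (homOfLE (show (⟨j.1, j.2.trans h⟩ : SumLe r') ≤ ⟨j'.1, j'.2.trans h⟩ from
            leOfHom f)) }

/-- The graded-module tensor product of one-parameter persistence modules:
`(M ⊗_gr N)_r = colim_{s+t ≤ r} (M_s ⊗ N_t)`, with structure maps induced by
inclusions of index posets. -/
def grTensor (M N : ℝ ⥤ ModuleCat k) : ℝ ⥤ ModuleCat k where
  obj r := colimit (grDiagram k M N r)
  map {r r'} f := colimit.desc (grDiagram k M N r) (grCocone k M N (leOfHom f))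
  map_id r := by
    apply colimit.hom_ext
    intro j
    rw [colimit.ι_desc]
    exact (Category.comp_id _).symm
  map_comp {r r' r''} f g := by
    apply colimit.hom_ext
    intro j
    rw [colimit.ι_desc]
    erw [show colimit.ι (grDiagram k M N r) j ≫
        (colimit.desc (grDiagram k M N r) (grCocone k M N (leOfHom f)) ≫
          colimit.desc (grDiagram k M N r') (grCocone k M N (leOfHom g))) =
        (colimit.ι (grDiagram k M N r) j ≫
          colimit.desc (grDiagram k M N r) (grCocone k M N (leOfHom f))) ≫
          colimit.desc (grDiagram k M N r') (grCocone k M N (leOfHom g)) from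
      (Category.assoc _ _ _).symm, colimit.ι_desc]
    erw [show ((grCocone k M N (leOfHom f)).ι.app j : _ ⟶ _) =
        colimit.ι (grDiagram k M N r') ⟨j.1, j.2.trans (leOfHom f)⟩ from rfl,
      colimit.ι_desc]
    rfl

end

open CategoryTheory Limits

noncomputable section
variable (k : Type) [Field k]

/-- The map of degree-`r` tensor diagrams induced by a morphism in the left variable. -/
def grDiagramMapLeft {M M' : ℝ ⥤ ModuleCat k} (φ : M ⟶ M') (N : ℝ ⥤ ModuleCat k)
    (r : ℝ) : grDiagram k M N r ⟶ grDiagram k M' N r where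
  app p := ModuleCat.ofHom (TensorProduct.map (φ.app p.1.1).hom LinearMap.id)
  naturality {p q} f := by
    ext : 1
    apply TensorProduct.ext'
    intro x y
    have h1 := congr_arg (fun g => ModuleCat.Hom.hom g x) (φ.naturality (homOfLE (SumLe.le1 (leOfHom f))))
    simp only [ModuleCat.hom_comp, LinearMap.comp_apply] at h1
    show TensorProduct.map (φ.app q.1.1).hom LinearMap.id
        (TensorProduct.map (M.map (homOfLE (SumLe.le1 (leOfHom f)))).hom
          (N.map (homOfLE (SumLe.le2 (leOfHom f)))).hom (x ⊗ₜ[k] y)) =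
      TensorProduct.map (M'.map (homOfLE (SumLe.le1 (leOfHom f)))).hom
        (N.map (homOfLE (SumLe.le2 (leOfHom f)))).hom
        (TensorProduct.map (φ.app p.1.1).hom LinearMap.id (x ⊗ₜ[k] y))
    simp [TensorProduct.map_tmul, h1]

/-- The map of degree-`r` tensor diagrams induced by a morphism in the right variable. -/
def grDiagramMapRight (M : ℝ ⥤ ModuleCat k) {N N' : ℝ ⥤ ModuleCat k} (φ : N ⟶ N')
    (r : ℝ) : grDiagram k M N r ⟶ grDiagram k M N' r where
  app p := ModuleCat.ofHom (TensorProduct.map LinearMap.id (φ.app p.1.2).hom)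
  naturality {p q} f := by
    ext : 1
    apply TensorProduct.ext'
    intro x y
    have h1 := congr_arg (fun g => ModuleCat.Hom.hom g y) (φ.naturality (homOfLE (SumLe.le2 (leOfHom f))))
    simp only [ModuleCat.hom_comp, LinearMap.comp_apply] at h1
    show TensorProduct.map LinearMap.id (φ.app q.1.2).hom
        (TensorProduct.map (M.map (homOfLE (SumLe.le1 (leOfHom f)))).hom
          (N.map (homOfLE (SumLe.le2 (leOfHom f)))).hom (x ⊗ₜ[k] y)) =
      TensorProduct.map (M.map (homOfLE (SumLe.le1 (leOfHom f)))).hom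
        (N'.map (homOfLE (SumLe.le2 (leOfHom f)))).hom
        (TensorProduct.map LinearMap.id (φ.app p.1.2).hom (x ⊗ₜ[k] y))
    simp [TensorProduct.map_tmul, h1]

/-- Functoriality of the graded tensor product in the left variable. -/
def grTensorMapLeft {M M' : ℝ ⥤ ModuleCat k} (φ : M ⟶ M') (N : ℝ ⥤ ModuleCat k) :
    grTensor k M N ⟶ grTensor k M' N where
  app r := colimMap (grDiagramMapLeft k φ N r)
  naturality {r r'} f := by
    apply colimit.hom_ext
    intro j
    show colimit.ι (grDiagram k M N r) j ≫
        colimit.desc (grDiagram k M N r) (grCocone k M N (leOfHom f)) ≫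
        colimMap (grDiagramMapLeft k φ N r') =
      colimit.ι (grDiagram k M N r) j ≫
        colimMap (grDiagramMapLeft k φ N r) ≫
        colimit.desc (grDiagram k M' N r) (grCocone k M' N (leOfHom f))
    erw [← Category.assoc, colimit.ι_desc]
    erw [show ((grCocone k M N (leOfHom f)).ι.app j : _ ⟶ _) =
        colimit.ι (grDiagram k M N r') ⟨j.1, j.2.trans (leOfHom f)⟩ from rfl,
      ι_colimMap]
    erw [← Category.assoc, ι_colimMap, Category.assoc, colimit.ι_desc]
    rfl

/-- Functoriality of the graded tensor product in the right variable. -/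
def grTensorMapRight (M : ℝ ⥤ ModuleCat k) {N N' : ℝ ⥤ ModuleCat k} (φ : N ⟶ N') :
    grTensor k M N ⟶ grTensor k M N' where
  app r := colimMap (grDiagramMapRight k M φ r)
  naturality {r r'} f := by
    apply colimit.hom_ext
    intro j
    show colimit.ι (grDiagram k M N r) j ≫
        colimit.desc (grDiagram k M N r) (grCocone k M N (leOfHom f)) ≫
        colimMap (grDiagramMapRight k M φ r') =
      colimit.ι (grDiagram k M N r) j ≫
        colimMap (grDiagramMapRight k M φ r) ≫
        colimit.desc (grDiagram k M N' r) (grCocone k M N' (leOfHom f))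
    erw [← Category.assoc, colimit.ι_desc]
    erw [show ((grCocone k M N (leOfHom f)).ι.app j : _ ⟶ _) =
        colimit.ι (grDiagram k M N r') ⟨j.1, j.2.trans (leOfHom f)⟩ from rfl,
      ι_colimMap]
    erw [← Category.assoc, ι_colimMap, Category.assoc, colimit.ι_desc]
    rfl

end


noncomputable section NotProjPart
open CategoryTheory Limits

variable (k : Type) [Field k] (a : ℝ)

/-- The "free" persistence module `⊕_{b ∈ (a,r]} k[b,∞)` realized degreewise as
finsupps supported on `Ioc a r`. -/
def freeSum : ℝ ⥤ ModuleCat k where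
  obj r := ModuleCat.of k (Finsupp.supported k k (Set.Ioc a r))
  map {r r'} f := ModuleCat.ofHom (Submodule.inclusion
    (Finsupp.supported_mono (Set.Ioc_subset_Ioc_right (leOfHom f))))
  map_id r := by ext x; rfl
  map_comp f g := by ext x; rfl

lemma freeSum_zero {r : ℝ} (h : ¬ a < r) (x : (freeSum k a).obj r) : x = 0 := by
  refine Subtype.ext ?_
  have hx : x.1 ∈ (⊥ : Submodule k (ℝ →₀ k)) := by
    rw [← Finsupp.supported_empty (M := k) (R := k) (α := ℝ), ← Set.Ioc_eq_empty h]
    exact x.2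
  exact (Submodule.mem_bot k).mp hx

/-- Summing the coordinates gives a map onto the interval module. -/
def sumφApp (r : ℝ) :
    (Finsupp.supported k k (Set.Ioc a r)) →ₗ[k] (intervalObj k (Set.Ioi a) r) :=
  LinearMap.codRestrict _
    ((Finsupp.lsum k fun _ => (LinearMap.id : k →ₗ[k] k)).comp (Submodule.subtype _))
    (fun f => by
      by_cases h : a < r
      · simp [intervalObj, Set.mem_Ioi, h]
      · have hz : (f : ℝ →₀ k) = 0 := by
          rw [← Submodule.mem_bot (R := k),
            ← Finsupp.supported_empty (M := k) (R := k) (α := ℝ), ← Set.Ioc_eq_empty h]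
          exact f.2
        simp [intervalObj, Set.mem_Ioi, h, hz])

lemma sumφApp_coe {r : ℝ} (f : Finsupp.supported k k (Set.Ioc a r)) :
    (sumφApp k a r f : k) =
      (Finsupp.lsum k fun _ => (LinearMap.id : k →ₗ[k] k)) (f : ℝ →₀ k) := rfl

def sumφ : freeSum k a ⟶
    intervalModule k (Set.Ioi a) (.of_ordConnected Set.ordConnected_Ioi) where
  app r := ModuleCat.ofHom (sumφApp k a r)
  naturality {r r'} f := by
    ext x
    by_cases h : a < r
    · have h' : a < r' := lt_of_lt_of_le h (leOfHom f)
      apply Subtype.ext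
      show (sumφApp k a r' (Submodule.inclusion
          (Finsupp.supported_mono (Set.Ioc_subset_Ioc_right (leOfHom f))) x) : k) =
        (intervalMapAux k (Set.Ioi a) r r' (sumφApp k a r x) : k)
      rw [intervalMapAux_coe k (show r ∈ Set.Ioi a from h) (show r' ∈ Set.Ioi a from h')]
      rfl
    · rw [freeSum_zero k a h x]
      simp

instance : Epi (sumφ k a) := by
  have hepi : ∀ r : ℝ, Epi ((sumφ k a).app r) := by
    intro r
    rw [ModuleCat.epi_iff_surjective]
    intro y
    by_cases h : a < r
    · refine ⟨⟨Finsupp.single r y.1, ?_⟩, ?_⟩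
      · rw [Finsupp.mem_supported]
        intro t ht
        have : t = r := by
          have := Finsupp.support_single_subset ht
          simpa using this
        subst this
        exact ⟨h, le_refl t⟩
      · apply Subtype.ext
        show (Finsupp.lsum k fun _ => (LinearMap.id : k →ₗ[k] k))
          (Finsupp.single r y.1) = y.1
        simp
    · refine ⟨0, ?_⟩
      rw [map_zero]
      exact (intervalObj_eq_zero k (show r ∉ Set.Ioi a by simpa using h) y).symm
  exact NatTrans.epi_of_epi_app _

lemma not_projective_Ioi :
    ¬ Projective (intervalModule k (Set.Ioi a) (.of_ordConnected Set.ordConnected_Ioi)) := by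
  intro hP
  set N := intervalModule k (Set.Ioi a) (.of_ordConnected Set.ordConnected_Ioi) with hN
  haveI : Projective N := hP
  let l : N ⟶ freeSum k a := Projective.factorThru (𝟙 N) (sumφ k a)
  have hl : l ≫ sumφ k a = 𝟙 N := Projective.factorThru_comp _ _
  have hr : a < a + 1 := by linarith
  have hmem : (1 : k) ∈ intervalObj k (Set.Ioi a) (a + 1) := by
    simp [intervalObj, Set.mem_Ioi, hr]
  set x : N.obj (a + 1) := ⟨1, hmem⟩ with hx
  have key : l.app (a + 1) x = 0 := by
    apply Subtype.ext
    apply Finsupp.ext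
    intro t
    by_cases ht : t ∈ Set.Ioc a (a + 1)
    · obtain ⟨hat, htr⟩ := ht
      have hab : a < (a + t) / 2 := by linarith
      have hbt : (a + t) / 2 < t := by linarith
      have hbr : (a + t) / 2 ≤ a + 1 := by linarith
      have hmb : (1 : k) ∈ intervalObj k (Set.Ioi a) ((a + t) / 2) := by
        simp [intervalObj, Set.mem_Ioi, hab]
      have hmap : N.map (homOfLE hbr) ⟨1, hmb⟩ = x := by
        apply Subtype.ext
        show (intervalMapAux k (Set.Ioi a) _ _ ⟨1, hmb⟩ : k) = (1 : k)
        rw [intervalMapAux_coe k (show (a+t)/2 ∈ Set.Ioi a from hab)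
          (show a + 1 ∈ Set.Ioi a from hr)]
      have hnat := NatTrans.naturality_apply l (homOfLE hbr) (⟨1, hmb⟩ : N.obj ((a + t) / 2))
      rw [hmap] at hnat
      have hzero : ((l.app ((a + t) / 2)) ⟨1, hmb⟩).1 t = 0 := by
        by_contra hne
        have hsupp := (l.app ((a + t) / 2) ⟨1, hmb⟩).2
        rw [Finsupp.mem_supported] at hsupp
        have := hsupp (Finsupp.mem_support_iff.mpr hne)
        exact absurd this.2 (not_le.mpr hbt)
      rw [hnat]
      exact hzero
    · by_contra hne
      have hsupp := (l.app (a + 1) x).2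
      rw [Finsupp.mem_supported] at hsupp
      exact ht (hsupp (Finsupp.mem_support_iff.mpr hne))
  have hfin := ConcreteCategory.congr_hom (NatTrans.congr_app hl (a + 1)) x
  simp only [NatTrans.comp_app, NatTrans.id_app] at hfin
  erw [CategoryTheory.comp_apply, CategoryTheory.id_apply] at hfin
  rw [key, map_zero] at hfin
  have : (1 : k) = 0 := congrArg Subtype.val hfin.symm
  exact one_ne_zero this

end NotProjPart
noncomputable section FlatPart
open CategoryTheory Limits

variable (k : Type) [Field k] (a : ℝ)

/-- Shorthand for the interval module `k(a,∞)`. -/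
abbrev NIoi : ℝ ⥤ ModuleCat.{0} k :=
  intervalModule k (Set.Ioi a) (.of_ordConnected Set.ordConnected_Ioi)

/-- The filtered index poset `(-∞, r - a)`. -/
abbrev Jr (r : ℝ) : Type := {s : ℝ // s < r - a}

instance (r : ℝ) : Nonempty (Jr a r) := ⟨⟨r - a - 1, by linarith⟩⟩

/-- Inclusion of the index poset into `ℝ`. -/
def inclJr (r : ℝ) : Jr a r ⥤ ℝ :=
  Monotone.functor (f := fun s : Jr a r => s.1) fun _ _ h => h

example (r : ℝ) : IsFiltered (Jr a r) := inferInstance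

/-- The canonical generator `1` of the interval module in degree `t > a`. -/
def oneN {t : ℝ} (h : a < t) : intervalObj k (Set.Ioi a) t :=
  ⟨1, by simp [intervalObj, Set.mem_Ioi, h]⟩

lemma eq_smul_oneN {t : ℝ} (h : a < t) (n : intervalObj k (Set.Ioi a) t) :
    n = n.1 • oneN k a h := by
  apply Subtype.ext
  show n.1 = n.1 * 1
  rw [mul_one]

lemma grObj_zero {A : ℝ ⥤ ModuleCat.{0} k} {r : ℝ} (p : SumLe r) (h : ¬ a < p.1.2)
    (x : (grDiagram k A (NIoi k a) r).obj p) : x = 0 := by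
  have hN : ∀ n : intervalObj k (Set.Ioi a) p.1.2, n = 0 := fun n =>
    intervalObj_eq_zero k (show p.1.2 ∉ Set.Ioi a by simpa using h) n
  induction x using TensorProduct.induction_on with
  | zero => rfl
  | tmul x n => rw [hN n]; exact TensorProduct.tmul_zero _ _
  | add x y hx hy => rw [hx, hy]; exact add_zero _

/-- Contraction `A_s ⊗ k(a,∞)_t → A_s`, `x ⊗ n ↦ n • x`. -/
def contract (A : ℝ ⥤ ModuleCat.{0} k) {r : ℝ} (p : SumLe r) :
    TensorProduct k (A.obj p.1.1) ((NIoi k a).obj p.1.2) →ₗ[k] A.obj p.1.1 :=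
  (TensorProduct.rid k (A.obj p.1.1)).toLinearMap ∘ₗ
    LinearMap.lTensor (A.obj p.1.1) ((intervalObj k (Set.Ioi a) p.1.2).subtype)

lemma mapN_val {t t' : ℝ} (h : t ≤ t') (ht : a < t) (ht' : a < t')
    (n : (NIoi k a).obj t) : ((NIoi k a).map (homOfLE h) n).1 = n.1 :=
  intervalMapAux_coe k (show t ∈ Set.Ioi a from ht) (show t' ∈ Set.Ioi a from ht') n

lemma contract_tmul (A : ℝ ⥤ ModuleCat.{0} k) {r : ℝ} (p : SumLe r)
    (x : A.obj p.1.1) (n : (NIoi k a).obj p.1.2) :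
    contract k a A p (x ⊗ₜ n) = n.1 • x := by
  show (TensorProduct.rid k (A.obj p.1.1)).toLinearMap
      (LinearMap.lTensor (A.obj p.1.1) ((intervalObj k (Set.Ioi a) p.1.2).subtype)
        (x ⊗ₜ n)) = n.1 • x
  exact TensorProduct.rid_tmul x n.1

lemma grDiagram_map_tmul {A : ℝ ⥤ ModuleCat.{0} k} {r : ℝ} {p q : SumLe r} (f : p ⟶ q)
    (x : A.obj p.1.1) (n : (NIoi k a).obj p.1.2) :
    (grDiagram k A (NIoi k a) r).map f (x ⊗ₜ n) =
      (A.map (homOfLE (SumLe.le1 (leOfHom f))) x) ⊗ₜ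
        ((NIoi k a).map (homOfLE (SumLe.le2 (leOfHom f))) n) := rfl

/-- The cocone exhibiting `colim_{s < r - a} A_s` as a cocone over the
degree-`r` tensor diagram. -/
@[reducible] def coconeL (A : ℝ ⥤ ModuleCat.{0} k) (r : ℝ) : Cocone (grDiagram k A (NIoi k a) r) where
  pt := colimit (inclJr a r ⋙ A)
  ι :=
    { app := fun p =>
        if h : a < p.1.2 then
          ModuleCat.ofHom (contract k a A p) ≫
            colimit.ι (inclJr a r ⋙ A) ⟨p.1.1, by have h2 := p.2; linarith⟩
        else 0
      naturality := fun p q f => by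
        by_cases hp : a < p.1.2
        · have hq : a < q.1.2 := lt_of_lt_of_le hp (SumLe.le2 (leOfHom f))
          rw [dif_pos hp, dif_pos hq]
          apply ModuleCat.hom_ext
          apply TensorProduct.ext'
          intro x n
          have hw := colimit.w_apply (inclJr a r ⋙ A)
              (homOfLE (show (⟨p.1.1, by have h2 := p.2; linarith⟩ : Jr a r) ≤
                ⟨q.1.1, by have h2 := q.2; linarith⟩ from
                SumLe.le1 (leOfHom f))) x
          rw [show (inclJr a r ⋙ A).map
              (homOfLE (show (⟨p.1.1, by have h2 := p.2; linarith⟩ : Jr a r) ≤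
                ⟨q.1.1, by have h2 := q.2; linarith⟩ from SumLe.le1 (leOfHom f))) =
              A.map (homOfLE (SumLe.le1 (leOfHom f))) from
            congrArg A.map (Subsingleton.elim _ _)] at hw
          show colimit.ι (inclJr a r ⋙ A) ⟨q.1.1, by have h2 := q.2; linarith⟩
              (contract k a A q ((grDiagram k A (NIoi k a) r).map f (x ⊗ₜ n))) =
            colimit.ι (inclJr a r ⋙ A) ⟨p.1.1, by have h2 := p.2; linarith⟩
              (contract k a A p (x ⊗ₜ n))
          rw [grDiagram_map_tmul k a f x n, contract_tmul, contract_tmul]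
          erw [map_smul, map_smul,
            mapN_val k a (SumLe.le2 (leOfHom f)) hp hq n]
          exact congrArg (fun z => n.1 • z) hw
        · rw [dif_neg hp]
          refine ModuleCat.hom_ext (LinearMap.ext fun x => ?_)
          rw [grObj_zero k a p hp x]
          simp
        }

end FlatPart
noncomputable section FlatPart2
open CategoryTheory Limits

variable (k : Type) [Field k] (a : ℝ)

/-- `oneN` viewed in the interval module's degree-`t` object. -/
def oneNM {t : ℝ} (h : a < t) : (NIoi k a).obj t := oneN k a h

lemma eq_smul_oneNM {t : ℝ} (h : a < t) (n : (NIoi k a).obj t) :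
    n = n.1 • oneNM k a h := by
  apply Subtype.ext
  show n.1 = n.1 * 1
  rw [mul_one]

lemma map_homOfLE_self (A : ℝ ⥤ ModuleCat.{0} k) {s : ℝ} (h : s ≤ s) (x : A.obj s) :
    A.map (homOfLE h) x = x := by
  rw [show homOfLE h = 𝟙 s from Subsingleton.elim _ _, A.map_id]
  rfl

lemma slide_aux (A : ℝ ⥤ ModuleCat.{0} k) {r : ℝ} (m p : SumLe r) (h : m ≤ p)
    (hm : a < m.1.2) (hp : a < p.1.2) (x : A.obj m.1.1) (y : A.obj p.1.1)
    (hxy : A.map (homOfLE h.1) x = y) :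
    colimit.ι (grDiagram k A (NIoi k a) r) p (y ⊗ₜ oneNM k a hp) =
      colimit.ι (grDiagram k A (NIoi k a) r) m (x ⊗ₜ oneNM k a hm) := by
  have e := colimit.w_apply (grDiagram k A (NIoi k a) r) (homOfLE h)
    ((x ⊗ₜ oneNM k a hm : TensorProduct k (A.obj m.1.1) ((NIoi k a).obj m.1.2)) :
      (grDiagram k A (NIoi k a) r).obj m)
  erw [TensorProduct.map_tmul] at e
  rw [show (NIoi k a).map (homOfLE (SumLe.le2 (leOfHom (homOfLE h))))
      (oneNM k a hm) = oneNM k a hp from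
    Subtype.ext (mapN_val k a _ hm hp _)] at e
  rw [show A.map (homOfLE (SumLe.le1 (leOfHom (homOfLE h)))) x = y from hxy] at e
  exact e

lemma slide (A : ℝ ⥤ ModuleCat.{0} k) {r : ℝ} (p q : SumLe r) (h1 : p.1.1 ≤ q.1.1)
    (hp : a < p.1.2) (hq : a < q.1.2) (x : A.obj p.1.1) :
    colimit.ι (grDiagram k A (NIoi k a) r) q
        ((A.map (homOfLE h1) x) ⊗ₜ oneNM k a hq) =
      colimit.ι (grDiagram k A (NIoi k a) r) p (x ⊗ₜ oneNM k a hp) := by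
  have hle : p.1.1 + min p.1.2 q.1.2 ≤ r := by
    have h2 := p.2
    have h3 := min_le_left p.1.2 q.1.2
    linarith
  set m : SumLe r := ⟨(p.1.1, min p.1.2 q.1.2), hle⟩ with hm
  have hmm : a < m.1.2 := lt_min hp hq
  have e1 := slide_aux k a A m p ⟨le_refl _, min_le_left _ _⟩ hmm hp x x
    (map_homOfLE_self k A _ x)
  have e2 := slide_aux k a A m q ⟨h1, min_le_right _ _⟩ hmm hq x
    (A.map (homOfLE h1) x) (by
      exact congrArg (fun g => A.map g x) (Subsingleton.elim _ _))
  rw [e1, e2]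

/-- Canonical index above `s` in the tensor diagram. -/
def pJ (r : ℝ) (s : Jr a r) : SumLe r :=
  ⟨(s.1, (a + (r - s.1)) / 2), by
    have h2 := s.2
    show s.1 + (a + (r - s.1)) / 2 ≤ r
    linarith⟩

lemma pJ_pos (r : ℝ) (s : Jr a r) : a < (pJ a r s).1.2 := by
  have h2 := s.2
  show a < (a + (r - s.1)) / 2
  linarith

/-- The cocone exhibiting the degree-`r` tensor colimit as a cocone over
`s ↦ A_s`, `x ↦ x ⊗ 1`. -/
@[reducible] def coconeEta (A : ℝ ⥤ ModuleCat.{0} k) (r : ℝ) : Cocone (inclJr a r ⋙ A) where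
  pt := colimit (grDiagram k A (NIoi k a) r)
  ι :=
    { app := fun s =>
        ModuleCat.ofHom
          ((TensorProduct.mk k (A.obj s.1) ((NIoi k a).obj (pJ a r s).1.2)).flip
            (oneNM k a (pJ_pos a r s))) ≫
          colimit.ι (grDiagram k A (NIoi k a) r) (pJ a r s)
      naturality := fun s s' g => by
        refine ModuleCat.hom_ext (LinearMap.ext fun x => ?_)
        show colimit.ι (grDiagram k A (NIoi k a) r) (pJ a r s')
            ((((inclJr a r ⋙ A).map g x : A.obj s'.1) ⊗ₜ oneNM k a (pJ_pos a r s') :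
              TensorProduct k (A.obj s'.1) ((NIoi k a).obj (pJ a r s').1.2)) :
              (grDiagram k A (NIoi k a) r).obj (pJ a r s')) =
          colimit.ι (grDiagram k A (NIoi k a) r) (pJ a r s)
            (((x : A.obj s.1) ⊗ₜ oneNM k a (pJ_pos a r s) :
              TensorProduct k (A.obj s.1) ((NIoi k a).obj (pJ a r s).1.2)) :
              (grDiagram k A (NIoi k a) r).obj (pJ a r s))
        have hs := slide k a A (pJ a r s) (pJ a r s')
          (show s.1 ≤ s'.1 from leOfHom g) (pJ_pos a r s) (pJ_pos a r s') x
        rw [show (inclJr a r ⋙ A).map g = A.map (homOfLE (show s.1 ≤ s'.1 from leOfHom g))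
          from congrArg A.map (Subsingleton.elim _ _)]
        exact hs }

end FlatPart2
noncomputable section FlatPart3
open CategoryTheory Limits

variable (k : Type) [Field k] (a : ℝ)

lemma eta_theta (A : ℝ ⥤ ModuleCat.{0} k) (r : ℝ) :
    colimit.desc _ (coconeEta k a A r) ≫ colimit.desc _ (coconeL k a A r) =
      𝟙 (colimit (inclJr a r ⋙ A)) := by
  apply colimit.hom_ext
  intro s
  rw [colimit.ι_desc_assoc, Category.comp_id]
  show (ModuleCat.ofHom
      ((TensorProduct.mk k (A.obj s.1) ((NIoi k a).obj (pJ a r s).1.2)).flip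
        (oneNM k a (pJ_pos a r s))) ≫
      colimit.ι (grDiagram k A (NIoi k a) r) (pJ a r s)) ≫
      colimit.desc _ (coconeL k a A r) = colimit.ι (inclJr a r ⋙ A) s
  erw [Category.assoc, colimit.ι_desc]
  refine ModuleCat.hom_ext (LinearMap.ext fun x => ?_)
  dsimp only [coconeL]
  rw [dif_pos (pJ_pos a r s)]
  show colimit.ι (inclJr a r ⋙ A) s
      (contract k a A (pJ a r s) (x ⊗ₜ oneNM k a (pJ_pos a r s))) =
    colimit.ι (inclJr a r ⋙ A) s x
  erw [contract_tmul]
  erw [show (oneNM k a (pJ_pos a r s)).1 = (1 : k) from rfl, one_smul]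

lemma theta_eta (A : ℝ ⥤ ModuleCat.{0} k) (r : ℝ) :
    colimit.desc _ (coconeL k a A r) ≫ colimit.desc _ (coconeEta k a A r) =
      𝟙 (colimit (grDiagram k A (NIoi k a) r)) := by
  apply colimit.hom_ext
  intro p
  rw [colimit.ι_desc_assoc, Category.comp_id]
  by_cases hp : a < p.1.2
  · dsimp only [coconeL]
    rw [dif_pos hp]
    erw [Category.assoc, colimit.ι_desc]
    apply ModuleCat.hom_ext
    apply TensorProduct.ext'
    intro x n
    set sp : Jr a r := ⟨p.1.1, by have h2 := p.2; show p.1.1 < r - a; linarith⟩ with hsp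
    have hs := slide k a A p (pJ a r sp) (le_refl p.1.1) hp (pJ_pos a r sp) x
    erw [map_homOfLE_self k A (le_refl p.1.1) x] at hs
    show colimit.ι (grDiagram k A (NIoi k a) r) (pJ a r sp)
        ((contract k a A p (x ⊗ₜ n)) ⊗ₜ oneNM k a (pJ_pos a r sp)) =
      colimit.ι (grDiagram k A (NIoi k a) r) p (x ⊗ₜ n)
    erw [contract_tmul]
    erw [← TensorProduct.smul_tmul' (R := k) (R' := k) (M := A.obj p.1.1)]
    erw [map_smul, hs]
    conv_rhs => rw [eq_smul_oneNM k a hp n]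
    erw [TensorProduct.tmul_smul, map_smul]
  · dsimp only [coconeL]
    rw [dif_neg hp, zero_comp]
    refine (ModuleCat.hom_ext (LinearMap.ext fun x => ?_)).symm
    rw [grObj_zero k a p hp x]
    simp

lemma square_lemma {A B : ℝ ⥤ ModuleCat.{0} k} (f : A ⟶ B) (r : ℝ) :
    colimMap (grDiagramMapLeft k f (NIoi k a) r) ≫ colimit.desc _ (coconeL k a B r) =
      colimit.desc _ (coconeL k a A r) ≫ colimMap (Functor.whiskerLeft (inclJr a r) f) := by
  apply colimit.hom_ext
  intro p
  rw [ι_colimMap_assoc, colimit.ι_desc, colimit.ι_desc_assoc]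
  by_cases hp : a < p.1.2
  · dsimp only [coconeL]
    rw [dif_pos hp, dif_pos hp]
    apply ModuleCat.hom_ext
    apply TensorProduct.ext'
    intro x n
    have hlt : p.1.1 < r - a := by have h2 := p.2; linarith
    have hι := ConcreteCategory.congr_hom
      (ι_colimMap (Functor.whiskerLeft (inclJr a r) f) (⟨p.1.1, hlt⟩ : Jr a r)) x
    erw [CategoryTheory.comp_apply, CategoryTheory.comp_apply] at hι
    show colimit.ι (inclJr a r ⋙ B) ⟨p.1.1, hlt⟩
        (contract k a B p ((f.app p.1.1) x ⊗ₜ n)) =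
      colimMap (Functor.whiskerLeft (inclJr a r) f)
        (colimit.ι (inclJr a r ⋙ A) ⟨p.1.1, hlt⟩ (contract k a A p (x ⊗ₜ n)))
    erw [contract_tmul, contract_tmul]
    erw [map_smul, map_smul, map_smul]
    exact congrArg (fun z => n.1 • z) hι.symm
  · dsimp only [coconeL]
    rw [dif_neg hp, dif_neg hp, zero_comp, comp_zero]

lemma whisker_mono {A B : ℝ ⥤ ModuleCat.{0} k} (f : A ⟶ B) (hf : Mono f) (r : ℝ) :
    Mono (colimMap (Functor.whiskerLeft (inclJr a r) f)) := by
  have happ : ∀ s : ℝ, Function.Injective (f.app s) := by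
    intro s
    rw [← ModuleCat.mono_iff_injective]
    exact ((NatTrans.mono_iff_mono_app f).mp hf) s
  rw [ModuleCat.mono_iff_injective]
  rw [injective_iff_map_eq_zero]
  intro x hx
  obtain ⟨j, y, rfl⟩ := Concrete.colimit_exists_rep (inclJr a r ⋙ A) x
  have hx' : colimit.ι (inclJr a r ⋙ B) j ((Functor.whiskerLeft (inclJr a r) f).app j y) = 0 := by
    have := ConcreteCategory.congr_hom (ι_colimMap (Functor.whiskerLeft (inclJr a r) f) j) y
    erw [CategoryTheory.comp_apply, CategoryTheory.comp_apply] at this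
    rw [← this]
    exact hx
  obtain ⟨j', i, h0⟩ := Concrete.colimit_rep_eq_zero k (inclJr a r ⋙ B) j _ hx'
  have hnat := ConcreteCategory.congr_hom ((Functor.whiskerLeft (inclJr a r) f).naturality i) y
  erw [CategoryTheory.comp_apply, CategoryTheory.comp_apply] at hnat
  erw [← hnat] at h0
  have hzero : (inclJr a r ⋙ A).map i y = 0 := by
    refine happ j'.1 ?_
    erw [map_zero]
    exact h0
  have hw := ConcreteCategory.congr_hom (colimit.w (inclJr a r ⋙ A) i) y
  erw [CategoryTheory.comp_apply] at hw
  erw [hzero, map_zero] at hw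
  exact hw.symm

end FlatPart3
open CategoryTheory Limits in
/-- The interval module `k(a,∞)` is not a projective object in the category of
one-parameter persistence modules, although it is flat: tensoring with it (in the
graded-module sense) preserves monomorphisms. -/
theorem Ioi_not_projective_but_flat (k : Type) [Field k] (a : ℝ) :
    ¬ Projective (intervalModule k (Set.Ioi a) (.of_ordConnected Set.ordConnected_Ioi)) ∧
    ∀ {A B : ℝ ⥤ ModuleCat k} (f : A ⟶ B), Mono f →
      Mono (grTensorMapLeft k f
        (intervalModule k (Set.Ioi a) (.of_ordConnected Set.ordConnected_Ioi))) := by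
  constructor
  · exact not_projective_Ioi k a
  · intro A B f hf
    haveI : ∀ r : ℝ, Mono ((grTensorMapLeft k f (NIoi k a)).app r) := by
      intro r
      have hsq := square_lemma k a f r
      have key : colimMap (grDiagramMapLeft k f (NIoi k a) r) =
          (colimit.desc _ (coconeL k a A r) ≫ colimMap (Functor.whiskerLeft (inclJr a r) f)) ≫
            colimit.desc _ (coconeEta k a B r) := by
        rw [← hsq, Category.assoc, theta_eta k a B r, Category.comp_id]
      haveI h1 : Mono (colimMap (Functor.whiskerLeft (inclJr a r) f)) := whisker_mono k a f hf r
      haveI h2 : IsIso (colimit.desc _ (coconeL k a A r)) :=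
        ⟨colimit.desc _ (coconeEta k a A r), theta_eta k a A r, eta_theta k a A r⟩
      haveI h3 : IsIso (colimit.desc _ (coconeEta k a B r)) :=
        ⟨colimit.desc _ (coconeL k a B r), eta_theta k a B r, theta_eta k a B r⟩
      show Mono (colimMap (grDiagramMapLeft k f (NIoi k a) r))
      rw [key]
      infer_instance
    exact NatTrans.mono_of_mono_app _
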